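/- Assume the sets E₊(A*) and E₋(A*) are finite with card E₊(A*) + card E₋(A*) = n + 2. Then A* is a global minimizer of Ψ over ℝ^{n+1} if and only if the convex hulls of G₊(A*) and G₋(A*) in ℝ^{n+1} have nonempty intersection. -/

import Mathlib

/-- The modelling function `L(A,x) = a₀ + ∑_{i=1}^n aᵢ gᵢ(x)`. -/
noncomputable def modelFun {d n : ℕ} (g : Fin n → (Fin d → ℝ) → ℝ)
    (A : Fin (n + 1) → ℝ) (x : Fin d → ℝ) : ℝ :=
  A 0 + ∑ i : Fin n, A i.succ * g i x

/-- The uniform approximation error `Ψ(A) = sup_{x ∈ Q} |f(x) − L(A,x)|`. -/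
noncomputable def uniformError {d n : ℕ} (Q : Set (Fin d → ℝ))
    (f : (Fin d → ℝ) → ℝ) (g : Fin n → (Fin d → ℝ) → ℝ)
    (A : Fin (n + 1) → ℝ) : ℝ :=
  sSup ((fun x => |f x - modelFun g A x|) '' Q)

/-- The set of maximal positive deviation points. -/
def Eplus {d n : ℕ} (Q : Set (Fin d → ℝ)) (f : (Fin d → ℝ) → ℝ)
    (g : Fin n → (Fin d → ℝ) → ℝ) (A : Fin (n + 1) → ℝ) : Set (Fin d → ℝ) :=
  {x ∈ Q | f x - modelFun g A x = uniformError Q f g A}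

/-- The set of maximal negative deviation points. -/
def Eminus {d n : ℕ} (Q : Set (Fin d → ℝ)) (f : (Fin d → ℝ) → ℝ)
    (g : Fin n → (Fin d → ℝ) → ℝ) (A : Fin (n + 1) → ℝ) : Set (Fin d → ℝ) :=
  {x ∈ Q | modelFun g A x - f x = uniformError Q f g A}

/-- The vector `(1, g₁(x), …, gₙ(x)) ∈ ℝ^{n+1}`. -/
def gVec {d n : ℕ} (g : Fin n → (Fin d → ℝ) → ℝ) (x : Fin d → ℝ) :
    Fin (n + 1) → ℝ :=
  Fin.cons 1 (fun i => g i x)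

/-- `G₊(A) = {(1,g₁(x),…,gₙ(x)) : x ∈ E₊(A)}`. -/
def Gplus {d n : ℕ} (Q : Set (Fin d → ℝ)) (f : (Fin d → ℝ) → ℝ)
    (g : Fin n → (Fin d → ℝ) → ℝ) (A : Fin (n + 1) → ℝ) :
    Set (Fin (n + 1) → ℝ) :=
  gVec g '' Eplus Q f g A

/-- `G₋(A) = {(1,g₁(x),…,gₙ(x)) : x ∈ E₋(A)}`. -/
def Gminus {d n : ℕ} (Q : Set (Fin d → ℝ)) (f : (Fin d → ℝ) → ℝ)
    (g : Fin n → (Fin d → ℝ) → ℝ) (A : Fin (n + 1) → ℝ) :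
    Set (Fin (n + 1) → ℝ) :=
  gVec g '' Eminus Q f g A

section helpers
variable {d n : ℕ} {Q : Set (Fin d → ℝ)} {f : (Fin d → ℝ) → ℝ}
  {g : Fin n → (Fin d → ℝ) → ℝ}

lemma modelFun_eq_sum (A : Fin (n + 1) → ℝ) (x : Fin d → ℝ) :
    modelFun g A x = ∑ i, A i * gVec g x i := by
  simp [modelFun, gVec, Fin.sum_univ_succ]

lemma modelFun_sub (A B : Fin (n + 1) → ℝ) (x : Fin d → ℝ) :
    modelFun g (A - B) x = modelFun g A x - modelFun g B x := by
  simp [modelFun_eq_sum, sub_mul, Finset.sum_sub_distrib]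

lemma modelFun_add_smul (A B : Fin (n + 1) → ℝ) (ε : ℝ) (x : Fin d → ℝ) :
    modelFun g (A + ε • B) x = modelFun g A x + ε * modelFun g B x := by
  simp [modelFun_eq_sum, add_mul, Finset.sum_add_distrib, mul_assoc, Finset.mul_sum]

lemma continuous_modelFun (hg : ∀ i, Continuous (g i)) (A : Fin (n + 1) → ℝ) :
    Continuous (modelFun g A) := by
  unfold modelFun
  exact continuous_const.add (continuous_finset_sum _ fun i _ => continuous_const.mul (hg i))

lemma isLinearMap_sumMul (B : Fin (n + 1) → ℝ) :
    IsLinearMap ℝ (fun w : Fin (n + 1) → ℝ => ∑ i, B i * w i) := by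
  constructor
  · intro x y; simp [mul_add, Finset.sum_add_distrib]
  · intro c x; simp [Finset.mul_sum, mul_left_comm]

lemma abs_le_uniformError (hQc : IsCompact Q) (hf : Continuous f)
    (hg : ∀ i, Continuous (g i)) (A : Fin (n + 1) → ℝ) {x : Fin d → ℝ} (hx : x ∈ Q) :
    |f x - modelFun g A x| ≤ uniformError Q f g A :=
  le_csSup ((hQc.image ((hf.sub (continuous_modelFun hg A)).abs)).bddAbove) ⟨x, hx, rfl⟩

lemma exists_uniformError_eq (hQne : Q.Nonempty) (hQc : IsCompact Q) (hf : Continuous f)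
    (hg : ∀ i, Continuous (g i)) (A : Fin (n + 1) → ℝ) :
    ∃ x ∈ Q, |f x - modelFun g A x| = uniformError Q f g A := by
  obtain ⟨x, hx, hxe⟩ := (hQc.image ((hf.sub (continuous_modelFun hg A)).abs)).sSup_mem
    (hQne.image _)
  exact ⟨x, hx, hxe⟩

lemma exists_delta {h φ : (Fin d → ℝ) → ℝ} (hQc : IsCompact Q)
    (hh : Continuous h) (hφ : Continuous φ) {Ψ : ℝ}
    (hub : ∀ x ∈ Q, h x ≤ Ψ) (hE : ∀ x ∈ Q, h x = Ψ → 0 < φ x) :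
    ∃ δ > 0, ∀ x ∈ Q, Ψ - δ < h x → 0 < φ x := by
  have hSc : IsCompact (Q ∩ {x | φ x ≤ 0}) :=
    hQc.inter_right (isClosed_le hφ continuous_const)
  rcases (Q ∩ {x | φ x ≤ 0}).eq_empty_or_nonempty with hS | hS
  · refine ⟨1, one_pos, fun x hx _ => ?_⟩
    by_contra hc
    push_neg at hc
    have hmem : x ∈ Q ∩ {x | φ x ≤ 0} := ⟨hx, hc⟩
    rw [hS] at hmem
    exact hmem
  · obtain ⟨x₀, hx₀S, hmax⟩ := hSc.exists_isMaxOn hS hh.continuousOn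
    have hlt : h x₀ < Ψ := by
      rcases lt_or_eq_of_le (hub _ hx₀S.1) with h' | h'
      · exact h'
      · exact absurd (hE _ hx₀S.1 h') (not_lt.2 hx₀S.2)
    refine ⟨Ψ - h x₀, by linarith, fun x hx hgt => ?_⟩
    by_contra hc
    push_neg at hc
    have hmem : x ∈ Q ∩ {x | φ x ≤ 0} := Set.mem_inter hx hc
    have hle2 : h x ≤ h x₀ := hmax hmem
    linarith

end helpers

/-- Assuming `card E₊(A*) + card E₋(A*) = n + 2`, `A*` is a global minimizer of `Ψ`
iff the convex hulls of `G₊(A*)` and `G₋(A*)` intersect. -/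
theorem optimality_iff_convexHulls_intersect
    (d n : ℕ) (hd : 1 ≤ d) (hn : 1 ≤ n)
    (Q : Set (Fin d → ℝ)) (hQne : Q.Nonempty) (hQc : IsCompact Q)
    (f : (Fin d → ℝ) → ℝ) (hf : Continuous f)
    (g : Fin n → (Fin d → ℝ) → ℝ) (hg : ∀ i, Continuous (g i))
    (Astar : Fin (n + 1) → ℝ)
    (hfinp : (Eplus Q f g Astar).Finite) (hfinm : (Eminus Q f g Astar).Finite)
    (hcard : (Eplus Q f g Astar).ncard + (Eminus Q f g Astar).ncard = n + 2) :
    (∀ A : Fin (n + 1) → ℝ, uniformError Q f g Astar ≤ uniformError Q f g A) ↔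
      (convexHull ℝ (Gplus Q f g Astar) ∩ convexHull ℝ (Gminus Q f g Astar)).Nonempty := by
  constructor
  · -- forward direction
    intro hopt
    by_contra hcon
    rw [Set.not_nonempty_iff_eq_empty] at hcon
    obtain ⟨x₀, hx₀Q, hx₀⟩ := exists_uniformError_eq hQne hQc hf hg Astar
    set Ψ := uniformError Q f g Astar with hΨdef
    have hΨ0 : 0 ≤ Ψ := hx₀ ▸ abs_nonneg _
    rcases eq_or_lt_of_le hΨ0 with hΨeq | hΨpos
    · -- Ψ = 0 : x₀ itself is in both extreme sets
      have h0 : f x₀ - modelFun g Astar x₀ = 0 := by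
        rw [← abs_eq_zero, hx₀, ← hΨeq]
      have hxp : x₀ ∈ Eplus Q f g Astar := ⟨hx₀Q, by rw [h0, ← hΨdef, ← hΨeq]⟩
      have hxm : x₀ ∈ Eminus Q f g Astar :=
        ⟨hx₀Q, by rw [show modelFun g Astar x₀ - f x₀ = 0 by linarith, ← hΨdef, ← hΨeq]⟩
      have hmem : gVec g x₀ ∈ convexHull ℝ (Gplus Q f g Astar) ∩ convexHull ℝ (Gminus Q f g Astar) :=
        ⟨subset_convexHull ℝ _ ⟨x₀, hxp, rfl⟩, subset_convexHull ℝ _ ⟨x₀, hxm, rfl⟩⟩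
      rw [hcon] at hmem
      exact hmem
    · -- Ψ > 0 : separate the hulls and perturb
      have hdisj : Disjoint (convexHull ℝ (Gplus Q f g Astar)) (convexHull ℝ (Gminus Q f g Astar)) :=
        Set.disjoint_iff_inter_eq_empty.2 hcon
      obtain ⟨F, u, v, hFu, huv, hFv⟩ := geometric_hahn_banach_compact_closed
        (convex_convexHull ℝ _) ((hfinp.image _).isCompact_convexHull (𝕜 := ℝ))
        (convex_convexHull ℝ _) ((hfinm.image _).isCompact_convexHull (𝕜 := ℝ)).isClosed hdisj
      set c : ℝ := (u + v) / 2 with hcdef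
      set B : Fin (n + 1) → ℝ :=
        fun i => (if i = 0 then c else 0) - F (fun j => if i = j then 1 else 0) with hBdef
      have hBrep : ∀ x : Fin d → ℝ, modelFun g B x = c - F (gVec g x) := by
        intro x
        have hF : F (gVec g x) = ∑ i, gVec g x i • ((F : (Fin (n + 1) → ℝ) →ₗ[ℝ] ℝ) fun j => if i = j then 1 else 0) :=
          LinearMap.pi_apply_eq_sum_univ (F : (Fin (n + 1) → ℝ) →ₗ[ℝ] ℝ) (gVec g x)
        rw [modelFun_eq_sum]
        have h1 : ∑ i, B i * gVec g x i
            = (∑ i, (if i = 0 then c else 0) * gVec g x i)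
              - ∑ i, (F fun j => if i = j then 1 else 0) * gVec g x i := by
          simp [hBdef, sub_mul, Finset.sum_sub_distrib]
        have h2 : ∑ i, (if i = (0 : Fin (n + 1)) then c else 0) * gVec g x i = c := by
          rw [Finset.sum_eq_single (0 : Fin (n + 1))]
          · simp [gVec]
          · intro b _ hb; simp [hb]
          · simp
        rw [h1, h2, hF]
        congr 1
        exact Finset.sum_congr rfl fun i _ => by
          simp [smul_eq_mul, mul_comm]
      have hBp : ∀ x ∈ Eplus Q f g Astar, 0 < modelFun g B x := by
        intro x hx
        have := hFu _ (subset_convexHull ℝ _ ⟨x, hx, rfl⟩)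
        rw [hBrep]
        simp only [hcdef]; linarith
      have hBm : ∀ x ∈ Eminus Q f g Astar, modelFun g B x < 0 := by
        intro x hx
        have := hFv _ (subset_convexHull ℝ _ ⟨x, hx, rfl⟩)
        rw [hBrep]
        simp only [hcdef]; linarith
      -- set up the perturbation
      set φ : (Fin d → ℝ) → ℝ := modelFun g B with hφdef
      set h : (Fin d → ℝ) → ℝ := fun x => f x - modelFun g Astar x with hhdef
      have hφc : Continuous φ := continuous_modelFun hg B
      have hhc : Continuous h := hf.sub (continuous_modelFun hg Astar)
      have hhub : ∀ x ∈ Q, h x ≤ Ψ := fun x hx =>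
        le_trans (le_abs_self _) (abs_le_uniformError hQc hf hg Astar hx)
      have hhub' : ∀ x ∈ Q, -h x ≤ Ψ := fun x hx =>
        le_trans (neg_le_abs _) (abs_le_uniformError hQc hf hg Astar hx)
      obtain ⟨δp, hδppos, hδp⟩ := exists_delta hQc hhc hφc hhub
        (fun x hx hxe => hBp x ⟨hx, hxe⟩)
      obtain ⟨δm, hδmpos, hδm⟩ := exists_delta (h := fun x => -h x) (φ := fun x => -φ x)
        hQc hhc.neg hφc.neg hhub'
        (fun x hx hxe => by
          have := hBm x ⟨hx, by simpa [hhdef, neg_sub] using hxe⟩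
          simpa using this)
      set M : ℝ := sSup ((fun x => |φ x|) '' Q) with hMdef
      have hMb : ∀ x ∈ Q, |φ x| ≤ M := fun x hx =>
        le_csSup ((hQc.image hφc.abs).bddAbove) ⟨x, hx, rfl⟩
      have hM0 : 0 ≤ M := le_trans (abs_nonneg _) (hMb x₀ hx₀Q)
      set δ : ℝ := min δp (min δm Ψ) with hδdef
      have hδpos : 0 < δ := lt_min hδppos (lt_min hδmpos hΨpos)
      have hδΨ : δ ≤ Ψ := le_trans (min_le_right _ _) (min_le_right _ _)
      have hδp' : Ψ - δp ≤ Ψ - δ := by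
        have := min_le_left δp (min δm Ψ); linarith
      have hδm' : Ψ - δm ≤ Ψ - δ := by
        have := le_trans (min_le_right δp (min δm Ψ)) (min_le_left δm Ψ); linarith
      set ε : ℝ := δ / (2 * (M + 1)) with hεdef
      have hεpos : 0 < ε := by positivity
      have hεM : ε * M ≤ δ / 2 := by
        rw [hεdef, div_mul_eq_mul_div, div_le_div_iff₀ (by positivity) (by norm_num)]
        nlinarith
      -- the perturbed approximation
      obtain ⟨x₁, hx₁Q, hx₁⟩ := exists_uniformError_eq hQne hQc hf hg (Astar + ε • B)
      have hx₁' : |h x₁ - ε * φ x₁| = uniformError Q f g (Astar + ε • B) := by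
        rw [← hx₁]
        congr 1
        rw [modelFun_add_smul, hhdef, hφdef]
        ring
      have hφbd : |φ x₁| ≤ M := hMb x₁ hx₁Q
      have hφub : φ x₁ ≤ M := le_trans (le_abs_self _) hφbd
      have hφlb : -M ≤ φ x₁ := neg_le_of_neg_le (le_trans (neg_le_abs _) hφbd)
      have hεφub : ε * φ x₁ ≤ δ / 2 :=
        le_trans (mul_le_mul_of_nonneg_left hφub hεpos.le) hεM
      have hεφlb : -(δ / 2) ≤ ε * φ x₁ := by nlinarith
      have key : |h x₁ - ε * φ x₁| < Ψ := by
        have hu := hhub x₁ hx₁Q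
        have hu' := hhub' x₁ hx₁Q
        rcases lt_or_ge (Ψ - δ) (h x₁) with hcase | hcase
        · have hφpos : 0 < φ x₁ := hδp x₁ hx₁Q (lt_of_le_of_lt hδp' hcase)
          have hεφ : 0 < ε * φ x₁ := mul_pos hεpos hφpos
          rw [abs_lt]
          constructor <;> linarith
        · rcases lt_or_ge (Ψ - δ) (-h x₁) with hcase2 | hcase2
          · have hφneg : 0 < -φ x₁ := hδm x₁ hx₁Q (lt_of_le_of_lt hδm' hcase2)
            have hεφ : ε * φ x₁ < 0 := by nlinarith
            rw [abs_lt]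
            constructor <;> linarith
          · rw [abs_lt]
            constructor <;> linarith
      have hle := hopt (Astar + ε • B)
      rw [← hx₁'] at hle
      linarith [key, hle]
  · -- backward direction
    rintro ⟨cpt, hcp, hcm⟩ A
    set B : Fin (n + 1) → ℝ := A - Astar with hBdef
    set ℓ : (Fin (n + 1) → ℝ) → ℝ := fun w => ∑ i, B i * w i with hℓdef
    have hlin := isLinearMap_sumMul B
    have hkey : ∀ x : Fin d → ℝ,
        (∑ i, B i * gVec g x i) = modelFun g A x - modelFun g Astar x := by
      intro x
      rw [← modelFun_eq_sum, hBdef, modelFun_sub]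
    have h1 : convexHull ℝ (Gplus Q f g Astar) ⊆
        {w | uniformError Q f g Astar - uniformError Q f g A ≤ ℓ w} := by
      apply convexHull_min _ (convex_halfSpace_ge hlin _)
      rintro w ⟨x, hx, rfl⟩
      have h2 : f x - modelFun g A x ≤ uniformError Q f g A :=
        le_trans (le_abs_self _) (abs_le_uniformError hQc hf hg A hx.1)
      have h3 := hx.2
      simp only [Set.mem_setOf_eq, hℓdef]
      rw [hkey x]
      linarith
    have h2 : convexHull ℝ (Gminus Q f g Astar) ⊆
        {w | ℓ w ≤ uniformError Q f g A - uniformError Q f g Astar} := by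
      apply convexHull_min _ (convex_halfSpace_le hlin _)
      rintro w ⟨x, hx, rfl⟩
      have h2 : modelFun g A x - f x ≤ uniformError Q f g A := by
        have := abs_le_uniformError hQc hf hg A hx.1
        rw [abs_sub_comm] at this
        exact le_trans (le_abs_self _) this
      have h3 := hx.2
      simp only [Set.mem_setOf_eq, hℓdef]
      rw [hkey x]
      linarith
    have ha := h1 hcp
    have hb := h2 hcm
    simp only [Set.mem_setOf_eq, hℓdef] at ha hb
    linarith
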